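/- Let D be a finite strongly connected digraph without loop-edges with vertex set V, and let V_k, V_k' ⊆ V be subsets with |V_k| = |V_k'| = k. Then the action of the defect k group G_{k,V_k} on V ∖ V_k is equivalent to the action of G_{k,V_k'} on V ∖ V_k': there exist a bijection φ : V ∖ V_k → V ∖ V_k' and a group isomorphism ψ : G_{k,V_k} → G_{k,V_k'} such that φ(x·g) = φ(x)·ψ(g) for all x ∈ V ∖ V_k and g ∈ G_{k,V_k}. -/

import Mathlib

variable {V : Type*}

/-- The elementary collapsing `e_{uv}`: sends `u` to `v` and fixes every other vertex. -/
def collapse [DecidableEq V] (u v : V) : Function.End V :=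
  fun x => if x = u then v else x

/-- The flow semigroup of a digraph with edge relation `E`. -/
def flowSemigroup [DecidableEq V] (E : V → V → Prop) : Subsemigroup (Function.End V) :=
  Subsemigroup.closure {f | ∃ u v, E u v ∧ f = collapse u v}

section Aux
variable [DecidableEq V] {E : V → V → Prop}

lemma collapse_mem {u v : V} (h : E u v) : collapse u v ∈ flowSemigroup E :=
  Subsemigroup.subset_closure ⟨u, v, h, rfl⟩

/-- `a` moves configuration `K` (of "holes") to configuration `K'`. -/
def SMoves (E : V → V → Prop) [DecidableEq V] (K K' : Set V) (a : Function.End V) : Prop :=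
  a ∈ flowSemigroup E ∧ Set.InjOn a Kᶜ ∧ a '' Kᶜ = K'ᶜ

lemma smoves_comp {K K₁ K₂ : Set V} {a b : Function.End V}
    (ha : SMoves E K K₁ a) (hb : SMoves E K₁ K₂ b) : SMoves E K K₂ (b * a) := by
  obtain ⟨haS, hai, haim⟩ := ha
  obtain ⟨hbS, hbi, hbim⟩ := hb
  refine ⟨mul_mem hbS haS, ?_, ?_⟩
  · intro x hx y hy hxy
    have hax : a x ∈ K₁ᶜ := haim ▸ Set.mem_image_of_mem a hx
    have hay : a y ∈ K₁ᶜ := haim ▸ Set.mem_image_of_mem a hy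
    exact hai hx hy (hbi hax hay hxy)
  · show ((b : V → V) ∘ (a : V → V)) '' Kᶜ = K₂ᶜ
    rw [← hbim, ← haim]; exact Set.image_comp b a Kᶜ

lemma collapse_apply (u v x : V) : collapse u v x = if x = u then v else x := rfl

lemma smoves_slide {x h : V} {K : Set V} (hx : x ∉ K) (hh : h ∈ K) (he : E x h) :
    SMoves E K ((K \ {h}) ∪ {x}) (collapse x h) := by
  have hxh : x ≠ h := fun e => hx (e ▸ hh)
  refine ⟨collapse_mem he, ?_, ?_⟩
  · intro y hy z hz hyz
    simp only [collapse] at hyz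
    split_ifs at hyz with h1 h2 h2
    · rw [h1, h2]
    · exact absurd (hyz ▸ hh) hz
    · exact absurd (hyz.symm ▸ hh) hy
    · exact hyz
  · ext y
    simp only [Set.mem_image, Set.mem_compl_iff, Set.mem_union, Set.mem_diff,
      Set.mem_singleton_iff, collapse_apply]
    constructor
    · rintro ⟨z, hz, rfl⟩
      by_cases hzx : z = x
      · subst hzx
        rw [collapse_apply, if_pos rfl]
        push_neg
        exact ⟨fun _ => rfl, Ne.symm hxh⟩
      · rw [collapse_apply, if_neg hzx]
        push_neg
        exact ⟨fun h2 => absurd h2 hz, hzx⟩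
    · intro hy
      push_neg at hy
      by_cases hyh : y = h
      · exact ⟨x, hx, by rw [collapse_apply, if_pos rfl]; exact hyh.symm⟩
      · exact ⟨y, fun hyK => hyh (hy.1 hyK), by rw [collapse_apply, if_neg hy.2]⟩
end Aux

section Aux2
variable [DecidableEq V] {E : V → V → Prop}

/-- Swap lemma: a hole at `t` may be exchanged with an occupied vertex `s`
along any walk from `s` to `t`. -/
lemma smoves_swap {s t : V} (hw : Relation.ReflTransGen E s t) :
    ∀ K : Set V, s ∉ K → t ∈ K → ∃ a, SMoves E K ((K \ {t}) ∪ {s}) a := by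
  induction hw using Relation.ReflTransGen.head_induction_on with
  | refl => exact fun K hs ht => absurd ht hs
  | head he hw ih =>
    rename_i s s₁
    intro K hs ht
    have hst : s ≠ t := fun h => hs (h ▸ ht)
    by_cases hs₁K : s₁ ∈ K
    · by_cases hts₁ : t = s₁
      · subst hts₁
        exact ⟨_, smoves_slide hs ht he⟩
      · have h1 : SMoves E K ((K \ {s₁}) ∪ {s}) (collapse s s₁) := smoves_slide hs hs₁K he
        have hs₁s : s₁ ≠ s := fun h => hs (h ▸ hs₁K)
        obtain ⟨a₂, ha₂⟩ := ih ((K \ {s₁}) ∪ {s})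
          (by simp [hs₁s])
          (by exact Or.inl ⟨ht, hts₁⟩)
        have hset : ((K \ {s₁} ∪ {s}) \ {t}) ∪ {s₁} = (K \ {t}) ∪ {s} := by
          ext x
          simp only [Set.mem_union, Set.mem_diff, Set.mem_singleton_iff]
          by_cases h1 : x = s₁ <;> by_cases h2 : x = s <;> by_cases h3 : x = t <;>
            simp_all <;> tauto
        exact ⟨_, hset ▸ smoves_comp h1 ha₂⟩
    · by_cases hss₁ : s = s₁
      · subst hss₁; exact ih K hs ht
      · obtain ⟨a₂, ha₂⟩ := ih K hs₁K ht
        have h2 : SMoves E ((K \ {t}) ∪ {s₁}) ((((K \ {t}) ∪ {s₁}) \ {s₁}) ∪ {s})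
            (collapse s s₁) :=
          smoves_slide
            (by simp [hs, hss₁])
            (by exact Or.inr rfl) he
        have hset : (((K \ {t}) ∪ {s₁}) \ {s₁}) ∪ {s} = (K \ {t}) ∪ {s} := by
          ext x
          simp only [Set.mem_union, Set.mem_diff, Set.mem_singleton_iff]
          by_cases h1 : x = s₁ <;> by_cases h2 : x = s <;> by_cases h3 : x = t <;>
            simp_all <;> tauto
        exact ⟨_, hset ▸ smoves_comp ha₂ h2⟩
end Aux2

section Aux3
variable [Fintype V] [DecidableEq V] {E : V → V → Prop}

/-- transitivity: from any hole configuration to any other of the same size -/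
lemma smoves_exists (hconn : ∀ u v : V, Relation.ReflTransGen E u v) :
    ∀ (n : ℕ) (K K' : Set V), (K \ K').ncard = n → K.ncard = K'.ncard → K ≠ K' →
      ∃ a, SMoves E K K' a := by
  intro n
  induction n with
  | zero =>
    intro K K' h0 hcard hne
    exfalso
    have hsub : K ⊆ K' :=
      Set.diff_eq_empty.mp (Set.ncard_eq_zero (Set.toFinite _) |>.mp h0)
    exact hne (Set.eq_of_subset_of_ncard_le hsub (le_of_eq hcard.symm) (Set.toFinite _))
  | succ n ih =>
    intro K K' hn hcard hne
    have hKK' : (K \ K').Nonempty :=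
      (Set.ncard_pos (Set.toFinite _)).mp (by omega)
    obtain ⟨t, htK, htK'⟩ := hKK'
    have hK'K : (K' \ K).Nonempty := by
      by_contra h
      rw [Set.not_nonempty_iff_eq_empty, Set.diff_eq_empty] at h
      exact hne (Set.eq_of_subset_of_ncard_le h (le_of_eq hcard) (Set.toFinite _)).symm
    obtain ⟨s, hsK', hsK⟩ := hK'K
    obtain ⟨a₁, ha₁⟩ := smoves_swap (hconn s t) K hsK htK
    set K₁ := (K \ {t}) ∪ {s} with hK₁
    by_cases hK₁K' : K₁ = K'
    · exact ⟨a₁, hK₁K' ▸ ha₁⟩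
    · have hd : K₁ \ K' = (K \ K') \ {t} := by
        ext x
        simp only [hK₁, Set.mem_union, Set.mem_diff, Set.mem_singleton_iff]
        constructor
        · rintro ⟨⟨hx, hxt⟩ | rfl, hx'⟩
          · exact ⟨⟨hx, hx'⟩, hxt⟩
          · exact absurd hsK' hx'
        · rintro ⟨⟨hx, hx'⟩, hxt⟩
          exact ⟨Or.inl ⟨hx, hxt⟩, hx'⟩
      have hdc : (K₁ \ K').ncard = n := by
        rw [hd, Set.ncard_diff_singleton_of_mem ((Set.mem_diff t).mpr ⟨htK, htK'⟩), hn]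
        omega
      have hc1 : K₁.ncard = K'.ncard := by
        rw [← hcard, hK₁, Set.union_singleton,
          Set.ncard_insert_of_notMem (by simp [hsK]) (Set.toFinite _),
          Set.ncard_diff_singleton_of_mem htK]
        have : 0 < K.ncard := Set.ncard_pos (Set.toFinite _) |>.mpr ⟨t, htK⟩
        omega
      obtain ⟨a₂, ha₂⟩ := ih K₁ K' hdc hc1 hK₁K'
      exact ⟨a₂ * a₁, smoves_comp ha₁ ha₂⟩

/-- escape: an element of the semigroup fixing the complement of K pointwise
and moving a given hole out of K -/
lemma escape_exists (hconn : ∀ u v : V, Relation.ReflTransGen E u v)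
    {K : Set V} {s : V} (hs : s ∉ K) :
    ∀ h ∈ K, ∃ m ∈ flowSemigroup E, (∀ x, x ∉ K → m x = x) ∧ m h ∉ K := by
  intro h hh
  have hw : Relation.ReflTransGen E h s := hconn h s
  induction hw using Relation.ReflTransGen.head_induction_on with
  | refl => exact absurd hh hs
  | head he hw ih =>
    rename_i a c
    by_cases hc : c ∈ K
    · obtain ⟨m', hm'S, hm'fix, hm'c⟩ := ih hc
      refine ⟨m' * collapse a c, mul_mem hm'S (collapse_mem he), ?_, ?_⟩
      · intro x hx
        have hxa : x ≠ a := fun h' => hx (h' ▸ hh)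
        show m' (collapse a c x) = x
        rw [show collapse a c x = x from if_neg hxa]
        exact hm'fix x hx
      · show m' (collapse a c a) ∉ K
        rw [show collapse a c a = c from if_pos rfl]
        exact hm'c
    · refine ⟨collapse a c, collapse_mem he, ?_, ?_⟩
      · intro x hx
        exact if_neg (fun h' : x = a => hx (h' ▸ hh))
      · show collapse a c a ∉ K
        rw [show collapse a c a = c from if_pos rfl]
        exact hc
end Aux3

section Aux4
variable [Fintype V] [DecidableEq V] {E : V → V → Prop}

lemma crusher_aux (hconn : ∀ u v : V, Relation.ReflTransGen E u v)
    {K : Set V} {s : V} (hs : s ∉ K) :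
    ∀ (n : ℕ) (C : Set V), C ⊆ K → C.ncard ≤ n →
      ∀ z ∈ flowSemigroup E, (∀ x, x ∉ K → z x = x) → (∀ x ∈ K, z x ∈ Kᶜ ∪ C) →
      ∃ z' ∈ flowSemigroup E, (∀ x, x ∉ K → z' x = x) ∧ ∀ x, z' x ∉ K := by
  intro n
  induction n with
  | zero =>
    intro C hCK hC0 z hzS hzfix hzim
    have : C = ∅ := Set.ncard_eq_zero (Set.toFinite _) |>.mp (Nat.le_zero.mp hC0)
    subst this
    refine ⟨z, hzS, hzfix, fun x => ?_⟩
    by_cases hx : x ∈ K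
    · have := hzim x hx
      simpa using this
    · rw [hzfix x hx]; exact hx
  | succ n ih =>
    intro C hCK hC z hzS hzfix hzim
    rcases Set.eq_empty_or_nonempty C with rfl | ⟨h, hhC⟩
    · exact ih ∅ (Set.empty_subset _) (by simp) z hzS hzfix hzim
    · obtain ⟨m, hmS, hmfix, hmh⟩ := escape_exists hconn hs h (hCK hhC)
      refine ih ((m '' C) ∩ K) Set.inter_subset_right ?_ (m * z) (mul_mem hmS hzS) ?_ ?_
      · have hsub : (m '' C) ∩ K ⊆ m '' (C \ {h}) := by
          rintro y ⟨⟨c, hc, rfl⟩, hyK⟩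
          refine ⟨c, ⟨hc, fun hch => ?_⟩, rfl⟩
          rw [Set.mem_singleton_iff] at hch
          exact hmh (hch ▸ hyK)
        calc ((m '' C) ∩ K).ncard ≤ (m '' (C \ {h})).ncard :=
              Set.ncard_le_ncard hsub (Set.toFinite _)
          _ ≤ (C \ {h}).ncard := Set.ncard_image_le (Set.toFinite _)
          _ = C.ncard - 1 := Set.ncard_diff_singleton_of_mem hhC
          _ ≤ n := by omega
      · intro x hx
        show m (z x) = x
        rw [hzfix x hx, hmfix x hx]
      · intro x hx
        show m (z x) ∈ Kᶜ ∪ (m '' C) ∩ K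
        rcases hzim x hx with hzx | hzx
        · rw [hmfix _ hzx]; exact Or.inl hzx
        · by_cases hmzx : m (z x) ∈ K
          · exact Or.inr ⟨Set.mem_image_of_mem m hzx, hmzx⟩
          · exact Or.inl hmzx

lemma crusher (hconn : ∀ u v : V, Relation.ReflTransGen E u v)
    {K : Set V} (hK : K.Nonempty) {s : V} (hs : s ∉ K) :
    ∃ z ∈ flowSemigroup E, (∀ x, x ∉ K → z x = x) ∧ ∀ x, z x ∉ K := by
  obtain ⟨h, hh⟩ := hK
  obtain ⟨m, hmS, hmfix, _⟩ := escape_exists hconn hs h hh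
  exact crusher_aux hconn hs K.ncard K (subset_refl _) le_rfl m hmS hmfix
    (fun x hx => by by_cases hm : m x ∈ K; exacts [Or.inr hm, Or.inl hm])

/-- the key existence lemma: an element of the semigroup mapping Kᶜ bijectively to K'ᶜ
with full range inside K'ᶜ -/
lemma strong_moves (hconn : ∀ u v : V, Relation.ReflTransGen E u v)
    {K K' : Set V} (hcard : K.ncard = K'.ncard) (hne : K ≠ K') :
    ∃ a, SMoves E K K' a ∧ ∀ x, a x ∉ K' := by
  have hK'ne : K'.Nonempty := by
    rcases Set.eq_empty_or_nonempty K' with rfl | h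
    · exfalso
      simp only [Set.ncard_empty] at hcard
      exact hne (by rw [Set.ncard_eq_zero (Set.toFinite _) |>.mp hcard])
    · exact h
  have hK'c : ∃ s, s ∉ K' := by
    by_contra hc
    push_neg at hc
    have huniv : K' = Set.univ := Set.eq_univ_of_forall hc
    have : K = Set.univ := by
      apply Set.eq_of_subset_of_ncard_le (Set.subset_univ K)
      rw [hcard, huniv]
    exact hne (this.trans huniv.symm)
  obtain ⟨s, hs⟩ := hK'c
  obtain ⟨a₀, ha₀S, ha₀i, ha₀im⟩ := smoves_exists hconn (K \ K').ncard K K' rfl hcard hne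
  obtain ⟨z, hzS, hzfix, hzim⟩ := crusher hconn hK'ne hs
  have hagree : ∀ x ∈ Kᶜ, (z * a₀) x = a₀ x := by
    intro x hx
    have : a₀ x ∈ K'ᶜ := ha₀im ▸ Set.mem_image_of_mem a₀ hx
    exact hzfix _ this
  refine ⟨z * a₀, ⟨mul_mem hzS ha₀S, ?_, ?_⟩, fun x => hzim _⟩
  · intro x hx y hy hxy
    rw [hagree x hx, hagree y hy] at hxy
    exact ha₀i hx hy hxy
  · rw [Set.image_congr hagree, ha₀im]
end Aux4

/-- The defect group `G_{k,K}` of the digraph `E` with defect set `K`: the group of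
permutations of `V ∖ K` generated by restrictions of elements `s` of the flow semigroup
satisfying `(V ∖ K)·s = V ∖ K` and `K·s ⊆ V ∖ K`. -/
def defectGroup [DecidableEq V] (E : V → V → Prop) (K : Set V) :
    Subgroup (Equiv.Perm {x : V // x ∉ K}) :=
  Subgroup.closure {p | ∃ s ∈ flowSemigroup E,
    (∀ x ∈ K, s x ∉ K) ∧ ∀ (x : V) (h : x ∉ K), s x = ↑(p ⟨x, h⟩)}

theorem stmt1 [Fintype V] [DecidableEq V] (E : V → V → Prop)
    (hloopless : ∀ v : V, ¬ E v v)
    (hstronglyconnected : ∀ u v : V, Relation.ReflTransGen E u v)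
    (k : ℕ) (K K' : Set V) (hK : K.ncard = k) (hK' : K'.ncard = k) :
    ∃ (φ : {x : V // x ∉ K} ≃ {x : V // x ∉ K'})
      (ψ : defectGroup E K ≃* defectGroup E K'),
      ∀ (g : defectGroup E K) (x : {x : V // x ∉ K}),
        φ ((g : Equiv.Perm {x : V // x ∉ K}) x)
          = (ψ g : Equiv.Perm {x : V // x ∉ K'}) (φ x) := by
  by_cases hKK' : K = K'
  · subst hKK'
    exact ⟨Equiv.refl _, MulEquiv.refl _, fun g x => rfl⟩
  have hcard : K.ncard = K'.ncard := by rw [hK, hK']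
  obtain ⟨a, ⟨haS, hai, haim⟩, hastr⟩ := strong_moves hstronglyconnected hcard hKK'
  obtain ⟨b, ⟨hbS, hbi, hbim⟩, hbstr⟩ :=
    strong_moves hstronglyconnected hcard.symm (Ne.symm hKK')
  -- the bijection α : Kᶜ ≃ K'ᶜ induced by a
  have hfinj : Function.Injective
      (fun x : {x : V // x ∉ K} => (⟨a x.1, hastr x.1⟩ : {x : V // x ∉ K'})) := by
    intro x y hxy
    exact Subtype.ext (hai x.2 y.2 (congrArg Subtype.val hxy))
  have hfsurj : Function.Surjective
      (fun x : {x : V // x ∉ K} => (⟨a x.1, hastr x.1⟩ : {x : V // x ∉ K'})) := by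
    intro y
    have hy : (y : V) ∈ a '' Kᶜ := by rw [haim]; exact y.2
    obtain ⟨x, hx, hxy⟩ := hy
    exact ⟨⟨x, hx⟩, Subtype.ext hxy⟩
  set α : {x : V // x ∉ K} ≃ {x : V // x ∉ K'} :=
    Equiv.ofBijective _ ⟨hfinj, hfsurj⟩ with hα
  have hg013 : Function.Injective
      (fun x : {x : V // x ∉ K'} => (⟨b x.1, hbstr x.1⟩ : {x : V // x ∉ K})) := by
    intro x y hxy
    exact Subtype.ext (hbi x.2 y.2 (congrArg Subtype.val hxy))
  have hgsurj : Function.Surjective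
      (fun x : {x : V // x ∉ K'} => (⟨b x.1, hbstr x.1⟩ : {x : V // x ∉ K})) := by
    intro y
    have hy : (y : V) ∈ b '' K'ᶜ := by rw [hbim]; exact y.2
    obtain ⟨x, hx, hxy⟩ := hy
    exact ⟨⟨x, hx⟩, Subtype.ext hxy⟩
  set β : {x : V // x ∉ K'} ≃ {x : V // x ∉ K} :=
    Equiv.ofBijective _ ⟨hg013, hgsurj⟩ with hβ
  -- the conjugation isomorphism on full permutation groups
  set ψ₀ : Equiv.Perm {x : V // x ∉ K} ≃* Equiv.Perm {x : V // x ∉ K'} :=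
    { Equiv.permCongr α with
      map_mul' := by
        intro p q
        ext y
        show (α ((p * q) (α.symm y)) : V) = α (p (α.symm (α (q (α.symm y)))))
        rw [Equiv.symm_apply_apply]
        rfl } with hψ₀
  -- membership of the "return" permutations in the generating sets
  have hc'mem : (β.trans α) ∈ {p | ∃ s ∈ flowSemigroup E,
      (∀ x ∈ K', s x ∉ K') ∧ ∀ (x : V) (h : x ∉ K'), s x = ↑(p ⟨x, h⟩)} :=
    ⟨a * b, mul_mem haS hbS, fun x _ => hastr _, fun x h => rfl⟩
  have hcmem : (α.trans β) ∈ {p | ∃ s ∈ flowSemigroup E,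
      (∀ x ∈ K, s x ∉ K) ∧ ∀ (x : V) (h : x ∉ K), s x = ↑(p ⟨x, h⟩)} :=
    ⟨b * a, mul_mem hbS haS, fun x _ => hbstr _, fun x h => rfl⟩
  have hkey : ∀ y : {x : V // x ∉ K'}, β ((β.trans α).symm y) = α.symm y := by
    intro y
    apply α.injective
    show (β.trans α) ((β.trans α).symm y) = α (α.symm y)
    rw [Equiv.apply_symm_apply, Equiv.apply_symm_apply]
  have hkey' : ∀ z : {x : V // x ∉ K'}, (α.trans β).symm (β z) = α.symm z := by
    intro z
    apply (α.trans β).injective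
    rw [Equiv.apply_symm_apply]
    show β z = β (α (α.symm z))
    rw [Equiv.apply_symm_apply]
  -- ψ₀ maps the defect group of K into that of K'
  have hpsi : ∀ p ∈ defectGroup E K, ψ₀ p ∈ defectGroup E K' := by
    intro p hp
    refine Subgroup.closure_induction ?_ ?_ ?_ ?_ hp
    · rintro p ⟨s, hsS, hsK, hsp⟩
      set q : Equiv.Perm {x : V // x ∉ K'} := β.trans (p.trans α) with hq
      have hqmem : q ∈ {p | ∃ s ∈ flowSemigroup E,
          (∀ x ∈ K', s x ∉ K') ∧ ∀ (x : V) (h : x ∉ K'), s x = ↑(p ⟨x, h⟩)} := by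
        refine ⟨a * s * b, mul_mem (mul_mem haS hsS) hbS, fun x _ => hastr _, fun x h => ?_⟩
        show a (s (b x)) = _
        rw [hsp (b x) (hbstr x)]
        rfl
      have heq : ψ₀ p = q * (β.trans α)⁻¹ := by
        ext y
        exact congrArg Subtype.val
          (show α (p (α.symm y)) = α (p (β ((β.trans α).symm y))) by rw [hkey])
      rw [heq]
      exact mul_mem (Subgroup.subset_closure hqmem)
        (inv_mem (Subgroup.subset_closure hc'mem))
    · rw [map_one]; exact one_mem _
    · intro x y _ _ hx hy
      rw [map_mul]; exact mul_mem hx hy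
    · intro x _ hx
      rw [map_inv]; exact inv_mem hx
  have hpsi' : ∀ p' ∈ defectGroup E K', ψ₀.symm p' ∈ defectGroup E K := by
    intro p' hp'
    refine Subgroup.closure_induction ?_ ?_ ?_ ?_ hp'
    · rintro p' ⟨s', hs'S, hs'K, hs'p⟩
      set q' : Equiv.Perm {x : V // x ∉ K} := α.trans (p'.trans β) with hq'
      have hq'mem : q' ∈ {p | ∃ s ∈ flowSemigroup E,
          (∀ x ∈ K, s x ∉ K) ∧ ∀ (x : V) (h : x ∉ K), s x = ↑(p ⟨x, h⟩)} := by
        refine ⟨b * s' * a, mul_mem (mul_mem hbS hs'S) haS, fun x _ => hbstr _, fun x h => ?_⟩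
        show b (s' (a x)) = _
        rw [hs'p (a x) (hastr x)]
        rfl
      have heq : ψ₀.symm p' = (α.trans β)⁻¹ * q' := by
        ext y
        exact congrArg Subtype.val
          (show α.symm (p' (α y)) = (α.trans β).symm (β (p' (α y))) by rw [hkey'])
      rw [heq]
      exact mul_mem (inv_mem (Subgroup.subset_closure hcmem))
        (Subgroup.subset_closure hq'mem)
    · rw [map_one]; exact one_mem _
    · intro x y _ _ hx hy
      rw [map_mul]; exact mul_mem hx hy
    · intro x _ hx
      rw [map_inv]; exact inv_mem hx
  have hmap : Subgroup.map (ψ₀ : Equiv.Perm {x : V // x ∉ K} →* Equiv.Perm {x : V // x ∉ K'})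
      (defectGroup E K) = defectGroup E K' := by
    apply le_antisymm
    · rintro x hx
      rw [Subgroup.mem_map] at hx
      obtain ⟨p, hp, rfl⟩ := hx
      exact hpsi p hp
    · intro p' hp'
      rw [Subgroup.mem_map]
      exact ⟨ψ₀.symm p', hpsi' p' hp', ψ₀.apply_symm_apply p'⟩
  refine ⟨α, (ψ₀.subgroupMap (defectGroup E K)).trans (MulEquiv.subgroupCongr hmap),
    fun g x => ?_⟩
  show α ((g : Equiv.Perm {x : V // x ∉ K}) x)
      = α ((g : Equiv.Perm {x : V // x ∉ K}) (α.symm (α x)))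
  rw [Equiv.symm_apply_apply]
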